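/- For natural numbers n, m ≥ 1, the finite Łukasiewicz chain Ł_n (with universe {0,1,…,n} and operations x·y = max(x+y−n, 0), x→y = min(n−x+y, n)) embeds as a hoop into Ł_m if and only if n divides m. -/

import Mathlib

/-- The interval `[0, u]` in a totally ordered abelian group: the universe of
the Wajsberg hoop `Γ(G, u)`. -/
def Gam {G : Type*} [AddCommGroup G] [LinearOrder G] [IsOrderedAddMonoid G] (u : G) : Type _ :=
  {x : G // 0 ≤ x ∧ x ≤ u}

/-- Product `a·b = max(a+b-u, 0)` of `Γ(G,u)`. -/
def hmul {G : Type*} [AddCommGroup G] [LinearOrder G] [IsOrderedAddMonoid G] {u : G} (a b : Gam u) : Gam u :=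
  ⟨max (a.1 + b.1 - u) 0, le_max_right _ _,
    max_le (sub_le_iff_le_add.mpr (add_le_add a.2.2 b.2.2)) (a.2.1.trans a.2.2)⟩

/-- Residuum `a→b = min(u-a+b, u)` of `Γ(G,u)`. -/
def himp {G : Type*} [AddCommGroup G] [LinearOrder G] [IsOrderedAddMonoid G] {u : G} (a b : Gam u) : Gam u :=
  ⟨min (u - a.1 + b.1) u,
    le_min (add_nonneg (sub_nonneg.mpr a.2.2) b.2.1) (a.2.1.trans a.2.2),
    min_le_right _ _⟩

/-- Top element (monoid unit) of `Γ(G,u)`. -/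
def hone {G : Type*} [AddCommGroup G] [LinearOrder G] [IsOrderedAddMonoid G] (u : G) (hu : 0 ≤ u) : Gam u :=
  ⟨u, hu, le_rfl⟩

/-- An embedding of hoops: an injective map preserving `·`, `→` and `1`. -/
structure IsHoopEmbedding {A B : Type*} (mA : A → A → A) (iA : A → A → A) (oA : A)
    (mB : B → B → B) (iB : B → B → B) (oB : B) (f : A → B) : Prop where
  inj : Function.Injective f
  map_mul : ∀ x y, f (mA x y) = mB (f x) (f y)
  map_imp : ∀ x y, f (iA x y) = iB (f x) (f y)
  map_one : f oA = oB

/-- for `n, m ≥ 1`, the finite Łukasiewicz chain `Ł_n = Γ(ℤ,n)` embeds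
(as a hoop) into `Ł_m` if and only if `n ∣ m`. -/
theorem luk_chain_embeds_iff (n m : ℕ) (hn : 1 ≤ n) (hm : 1 ≤ m) :
    (∃ f : Gam ((n : ℤ)) → Gam ((m : ℤ)),
        IsHoopEmbedding hmul himp (hone _ (Int.natCast_nonneg n))
          hmul himp (hone _ (Int.natCast_nonneg m)) f)
      ↔ n ∣ m := by
  have hN : (1 : ℤ) ≤ (n : ℤ) := by exact_mod_cast hn
  have hM : (1 : ℤ) ≤ (m : ℤ) := by exact_mod_cast hm
  constructor
  · rintro ⟨f, hf⟩
    have hz1 : (0:ℤ) ≤ (n:ℤ) := by omega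
    set z : Gam ((n:ℤ)) := ⟨0, le_rfl, hz1⟩ with hzdef
    -- f z = 0
    have hfz : (f z).1 = 0 := by
      have h1 := hf.map_mul z z
      have h2 : hmul z z = z := Subtype.ext (by show max ((0:ℤ) + 0 - (n:ℤ)) 0 = 0; omega)
      rw [h2] at h1
      have hb1 := (f z).2.1
      have hb2 := (f z).2.2
      have hval : (f z).1 = max ((f z).1 + (f z).1 - (m:ℤ)) 0 := by
        have hv := congrArg Subtype.val h1
        simp only [hmul] at hv
        exact hv
      have hne : (f z).1 ≠ (m:ℤ) := by
        intro hc
        have he : f z = f (hone ((n:ℤ)) (Int.natCast_nonneg n)) := by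
          rw [hf.map_one]; exact Subtype.ext hc
        have he2 := hf.inj he
        have : (0:ℤ) = (n:ℤ) := congrArg Subtype.val he2
        omega
      omega
    -- the coatom n-1
    have ha1 : (0:ℤ) ≤ (n:ℤ) - 1 := by omega
    set a1 : Gam ((n:ℤ)) := ⟨(n:ℤ) - 1, ha1, by omega⟩ with ha1def
    set d : ℤ := (m:ℤ) - (f a1).1 with hddef
    have hfa1b1 := (f a1).2.1
    have hfa1b2 := (f a1).2.2
    have hd0 : 0 ≤ d := by omega
    have hdM : d ≤ (m:ℤ) := by omega
    -- d ≥ 1 by injectivity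
    have hd1 : 1 ≤ d := by
      by_contra hc
      have hdz : d = 0 := by omega
      have he : f a1 = f (hone ((n:ℤ)) (Int.natCast_nonneg n)) := by
        rw [hf.map_one]; exact Subtype.ext (by simp [hone]; omega)
      have he2 := hf.inj he
      have : (n:ℤ) - 1 = (n:ℤ) := congrArg Subtype.val he2
      omega
    -- f 1 = d via negation
    have h1b : (0:ℤ) ≤ (1:ℤ) := by omega
    set o : Gam ((n:ℤ)) := ⟨1, h1b, by omega⟩ with hodef
    have hfo : (f o).1 = d := by
      have h1 := hf.map_imp a1 z
      have h2 : himp a1 z = o := Subtype.ext (by simp [_root_.himp, hzdef, ha1def, hodef]; omega)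
      rw [h2] at h1
      have h3 : (f o).1 = min ((m:ℤ) - (f a1).1 + (f z).1) (m:ℤ) := by
        have hv := congrArg Subtype.val h1
        simp only [_root_.himp] at hv
        exact hv
      rw [hfz] at h3
      omega
    -- powers of the coatom
    have key : ∀ k : ℕ, ∀ h1 : (0:ℤ) ≤ (n:ℤ) - (k : ℤ),
        (f ⟨(n:ℤ) - (k : ℤ), h1, by omega⟩).1 = max ((m:ℤ) - (k : ℤ) * d) 0 := by
      intro k
      induction k with
      | zero =>
        intro h1
        have he : (⟨(n:ℤ) - ((0:ℕ) : ℤ), h1, by omega⟩ : Gam ((n:ℤ)))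
            = hone ((n:ℤ)) (Int.natCast_nonneg n) := Subtype.ext (by simp [hone])
        rw [he, hf.map_one]
        show ((m:ℤ)) = max ((m:ℤ) - ((0:ℕ) : ℤ) * d) 0
        push_cast
        omega
      | succ k ih =>
        intro h1
        have hk1 : (0:ℤ) ≤ (n:ℤ) - (k : ℤ) := by push_cast at h1 ⊢; omega
        have h2 := hf.map_mul ⟨(n:ℤ) - (k : ℤ), hk1, by omega⟩ a1
        have h3 : hmul (⟨(n:ℤ) - (k : ℤ), hk1, by omega⟩ : Gam ((n:ℤ))) a1
            = ⟨(n:ℤ) - ((k+1 : ℕ) : ℤ), h1, by omega⟩ := by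
          apply Subtype.ext
          simp [hmul, ha1def]
          push_cast at h1 ⊢
          omega
        rw [h3] at h2
        have h4 : (f ⟨(n:ℤ) - ((k+1 : ℕ) : ℤ), h1, by omega⟩).1
            = max ((f ⟨(n:ℤ) - (k : ℤ), hk1, by omega⟩).1 + (f a1).1 - (m:ℤ)) 0 := by
          have hv := congrArg Subtype.val h2
          simp only [hmul] at hv
          exact hv
        rw [ih hk1] at h4
        rw [h4]
        have hfa1 : (f a1).1 = (m:ℤ) - d := by omega
        rw [hfa1]
        have hgen : ∀ e : ℤ, max (max ((m:ℤ) - e) 0 + ((m:ℤ) - d) - (m:ℤ)) 0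
            = max ((m:ℤ) - (e + d)) 0 := by
          intro e; omega
        have hg := hgen ((k : ℤ) * d)
        rw [hg]
        push_cast
        ring_nf
    -- specialize to k = n-1, where n - (n-1) = 1
    have hcast : ((n - 1 : ℕ) : ℤ) = (n:ℤ) - 1 := by
      push_cast [hn]; ring
    have hc1 : (0:ℤ) ≤ (n:ℤ) - ((n - 1 : ℕ) : ℤ) := by omega
    have hk := key (n - 1) hc1
    have heq : (⟨(n:ℤ) - ((n - 1 : ℕ) : ℤ), hc1, by omega⟩ : Gam ((n:ℤ))) = o := by
      apply Subtype.ext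
      simp [hodef]
      omega
    rw [heq, hfo, hcast] at hk
    -- hk : d = max (m - (n-1)*d) 0, with d ≥ 1, hence m = n*d
    have hMeq : (m:ℤ) = (n:ℤ) * d := by
      rcases max_cases ((m:ℤ) - ((n:ℤ) - 1) * d) 0 with ⟨h5, h6⟩ | ⟨h5, h6⟩ <;>
        rw [h5] at hk <;> nlinarith
    have hdvd : (n : ℤ) ∣ (m : ℤ) := ⟨d, hMeq⟩
    exact_mod_cast hdvd
  · rintro ⟨k, hk⟩
    have hk1 : 1 ≤ k := by
      rcases Nat.eq_zero_or_pos k with h | h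
      · exfalso; rw [h, Nat.mul_zero] at hk; omega
      · exact h
    have hkZ : (0:ℤ) ≤ (k : ℤ) := by positivity
    have hkZ1 : (1:ℤ) ≤ (k : ℤ) := by exact_mod_cast hk1
    have hmk : (m : ℤ) = (n : ℤ) * (k : ℤ) := by exact_mod_cast congrArg (Nat.cast : ℕ → ℤ) hk
    refine ⟨fun x => ⟨(k : ℤ) * x.1, mul_nonneg hkZ x.2.1, ?_⟩, ?_, ?_, ?_, ?_⟩
    · rw [hmk, mul_comm (n:ℤ) (k:ℤ)]
      exact mul_le_mul_of_nonneg_left x.2.2 hkZ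
    · intro x y hxy
      have h1 : (k : ℤ) * x.1 = (k : ℤ) * y.1 := congrArg Subtype.val hxy
      exact Subtype.ext (mul_left_cancel₀ (Int.natCast_ne_zero.mpr (by omega)) h1)
    · intro x y
      apply Subtype.ext
      show (k:ℤ) * max (x.1 + y.1 - (n:ℤ)) 0 = max ((k:ℤ)*x.1 + (k:ℤ)*y.1 - (m:ℤ)) 0
      rw [mul_max_of_nonneg _ _ hkZ, mul_zero, hmk]
      ring_nf
    · intro x y
      apply Subtype.ext
      show (k:ℤ) * min ((n:ℤ) - x.1 + y.1) (n:ℤ) = min ((m:ℤ) - (k:ℤ)*x.1 + (k:ℤ)*y.1) (m:ℤ)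
      rw [mul_min_of_nonneg _ _ hkZ, hmk]
      ring_nf
    · apply Subtype.ext
      show (k:ℤ) * (n:ℤ) = (m:ℤ)
      rw [hmk]; ring
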